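/- Let G=(V,E) be a finite graph with positive vertex weights w and x : E → ℝ≥0 satisfying ∑_{e∋u} x_e ≤ (1+δ)·w(u) for every vertex u, where δ ≥ 0. Suppose C is a vertex cover such that each v ∈ C satisfies ∑_{e∋v} x_e ≥ (1−σ)·w(v) with 0 ≤ σ < 1. Then w(C) ≤ (2(1+δ)/(1−σ))·OPT, where OPT is the minimum weight of a vertex cover. -/
import Mathlib


/-- Approximation via an approximately-valid fractional matching: if
`∑_{e∋u} x_e ≤ (1+δ)w(u)` for all `u`, and `C` is a vertex cover whose vertices
satisfy `∑_{e∋v} x_e ≥ (1-σ)w(v)`, then `w(C) ≤ (2(1+δ)/(1-σ))·OPT`. -/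
theorem stmt_12 {V : Type*} [Fintype V] [DecidableEq V]
    (G : SimpleGraph V) [DecidableRel G.Adj]
    (w : V → ℝ) (hw : ∀ v, 0 < w v)
    (δ σ : ℝ) (hδ : 0 ≤ δ) (hσ0 : 0 ≤ σ) (hσ1 : σ < 1)
    (x : Sym2 V → ℝ)
    (hx_nonneg : ∀ e ∈ G.edgeFinset, 0 ≤ x e)
    (hx_approx : ∀ u : V,
      ∑ e ∈ G.edgeFinset.filter (fun e => u ∈ e), x e ≤ (1 + δ) * w u)
    (C : Finset V)
    (hC_cover : ∀ e ∈ G.edgeFinset, ∃ v ∈ C, v ∈ e)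
    (hC_tight : ∀ v ∈ C,
      (1 - σ) * w v ≤ ∑ e ∈ G.edgeFinset.filter (fun e => v ∈ e), x e) :
    ∀ C' : Finset V, (∀ e ∈ G.edgeFinset, ∃ v ∈ C', v ∈ e) →
      ∑ v ∈ C, w v ≤ (2 * (1 + δ) / (1 - σ)) * ∑ v ∈ C', w v := by
  intro C' hC'
  have h1σ : (0:ℝ) < 1 - σ := by linarith
  have key : ∀ S : Finset V,
      ∑ v ∈ S, ∑ e ∈ G.edgeFinset.filter (fun e => v ∈ e), x e
        = ∑ e ∈ G.edgeFinset, ((S.filter (fun v => v ∈ e)).card : ℝ) * x e := by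
    intro S
    simp_rw [Finset.sum_filter]
    rw [Finset.sum_comm]
    refine Finset.sum_congr rfl fun e _ => ?_
    rw [← Finset.sum_filter, Finset.sum_const, nsmul_eq_mul]
  have card_le : ∀ e ∈ G.edgeFinset, ∀ S : Finset V,
      (S.filter (fun v => v ∈ e)).card ≤ 2 := by
    intro e _ S
    induction e using Sym2.ind with
    | _ a b =>
      calc (S.filter (fun v => v ∈ s(a,b))).card
          ≤ ({a, b} : Finset V).card := by
            apply Finset.card_le_card
            intro v hv
            simp only [Finset.mem_filter, Sym2.mem_iff] at hv
            simp [hv.2]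
        _ ≤ 2 := Finset.card_insert_le _ _ |>.trans (by simp)
  have card_ge : ∀ e ∈ G.edgeFinset, ∀ S : Finset V, (∃ v ∈ S, v ∈ e) →
      1 ≤ (S.filter (fun v => v ∈ e)).card := by
    intro e _ S ⟨v, hvS, hve⟩
    exact Finset.card_pos.mpr ⟨v, Finset.mem_filter.mpr ⟨hvS, hve⟩⟩
  have hle : (1 - σ) * ∑ v ∈ C, w v ≤ 2 * ∑ e ∈ G.edgeFinset, x e := by
    calc (1 - σ) * ∑ v ∈ C, w v
        = ∑ v ∈ C, (1 - σ) * w v := Finset.mul_sum _ _ _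
      _ ≤ ∑ v ∈ C, ∑ e ∈ G.edgeFinset.filter (fun e => v ∈ e), x e :=
          Finset.sum_le_sum fun v hv => hC_tight v hv
      _ = ∑ e ∈ G.edgeFinset, ((C.filter (fun v => v ∈ e)).card : ℝ) * x e := key C
      _ ≤ ∑ e ∈ G.edgeFinset, 2 * x e := by
          refine Finset.sum_le_sum fun e he => ?_
          have := card_le e he C
          exact mul_le_mul_of_nonneg_right (by exact_mod_cast this) (hx_nonneg e he)
      _ = 2 * ∑ e ∈ G.edgeFinset, x e := (Finset.mul_sum _ _ _).symm
  have hge : ∑ e ∈ G.edgeFinset, x e ≤ (1 + δ) * ∑ v ∈ C', w v := by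
    calc ∑ e ∈ G.edgeFinset, x e
        ≤ ∑ e ∈ G.edgeFinset, ((C'.filter (fun v => v ∈ e)).card : ℝ) * x e := by
          refine Finset.sum_le_sum fun e he => ?_
          have h1 := card_ge e he C' (hC' e he)
          nlinarith [hx_nonneg e he, (Nat.one_le_cast (α := ℝ)).mpr h1]
      _ = ∑ v ∈ C', ∑ e ∈ G.edgeFinset.filter (fun e => v ∈ e), x e := (key C').symm
      _ ≤ ∑ v ∈ C', (1 + δ) * w v := Finset.sum_le_sum fun v _ => hx_approx v
      _ = (1 + δ) * ∑ v ∈ C', w v := (Finset.mul_sum _ _ _).symm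
  rw [div_mul_eq_mul_div, le_div_iff₀ h1σ]
  nlinarith [hle, hge]
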